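/- In an (R,Z)-cluster pattern, the exchange matrices at any two vertices have equal rank and equal determinant: rank(B_t) = rank(B_{t_0}) and det(B_t) = det(B_{t_0}) for all t, t_0 ∈ 𝕋_n. -/

import Mathlib

open Matrix

/-- The generalized matrix mutation `μ_k^g` in direction `k`, with parameters `r`. -/
def genMut {n : ℕ} (r : Fin n → ℤ) (k : Fin n)
    (B : Matrix (Fin n) (Fin n) ℤ) : Matrix (Fin n) (Fin n) ℤ :=
  Matrix.of fun i j =>
    if i = k ∨ j = k then -B i j
    else B i j + r k * (B i k * max (-B k j) 0 + max (B i k) 0 * B k j)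

namespace GenMutAux

variable {n : ℕ}

/-- the column perturbation vector -/
def uVec (r : Fin n → ℤ) (k : Fin n) (A : Matrix (Fin n) (Fin n) ℤ) : Fin n → ℤ :=
  fun i => if i = k then -2 else r k * max (A i k) 0

/-- the row perturbation vector -/
def wVec (r : Fin n → ℤ) (k : Fin n) (A : Matrix (Fin n) (Fin n) ℤ) : Fin n → ℤ :=
  fun j => if j = k then -2 else r k * max (-A k j) 0

def Emat (r : Fin n → ℤ) (k : Fin n) (A : Matrix (Fin n) (Fin n) ℤ) :
    Matrix (Fin n) (Fin n) ℤ :=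
  1 + Matrix.replicateCol Unit (uVec r k A) * Matrix.replicateRow Unit (Pi.single k 1 : Fin n → ℤ)

def Fmat (r : Fin n → ℤ) (k : Fin n) (A : Matrix (Fin n) (Fin n) ℤ) :
    Matrix (Fin n) (Fin n) ℤ :=
  1 + Matrix.replicateCol Unit (Pi.single k 1 : Fin n → ℤ) * Matrix.replicateRow Unit (wVec r k A)

theorem det_Emat (r : Fin n → ℤ) (k : Fin n) (A : Matrix (Fin n) (Fin n) ℤ) :
    (Emat r k A).det = -1 := by
  rw [Emat, Matrix.det_one_add_replicateCol_mul_replicateRow, single_dotProduct]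
  simp [uVec]

theorem det_Fmat (r : Fin n → ℤ) (k : Fin n) (A : Matrix (Fin n) (Fin n) ℤ) :
    (Fmat r k A).det = -1 := by
  rw [Fmat, Matrix.det_one_add_replicateCol_mul_replicateRow, dotProduct_single]
  simp [wVec]

theorem factor (r : Fin n → ℤ) (k : Fin n) (A : Matrix (Fin n) (Fin n) ℤ)
    (hA : A k k = 0) :
    genMut r k A = Emat r k A * A * Fmat r k A := by
  have hE : Emat r k A * A
      = A + Matrix.replicateCol Unit (uVec r k A) * Matrix.replicateRow Unit (A k) := by
    rw [Emat, add_mul, one_mul, Matrix.mul_assoc, ← Matrix.replicateRow_vecMul,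
      Matrix.single_one_vecMul]
    rfl
  have hmid : Matrix.replicateRow Unit (A k) * Matrix.replicateCol Unit (Pi.single k 1 : Fin n → ℤ)
      = (0 : Matrix Unit Unit ℤ) := by
    rw [Matrix.replicateRow_mul_replicateCol]
    ext i j
    simp [dotProduct_single, hA]
  have h2 : A * (Matrix.replicateCol Unit (Pi.single k 1 : Fin n → ℤ) * Matrix.replicateRow Unit (wVec r k A))
      = Matrix.replicateCol Unit (fun i => A i k) * Matrix.replicateRow Unit (wVec r k A) := by
    rw [← Matrix.mul_assoc, ← Matrix.replicateCol_mulVec]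
    congr 1
    ext i j
    simp
  have h3 : (Matrix.replicateCol Unit (uVec r k A) * Matrix.replicateRow Unit (A k)) *
      (Matrix.replicateCol Unit (Pi.single k 1 : Fin n → ℤ) * Matrix.replicateRow Unit (wVec r k A)) = 0 := by
    rw [Matrix.mul_assoc, ← Matrix.mul_assoc (Matrix.replicateRow Unit (A k)), hmid, Matrix.zero_mul, Matrix.mul_zero]
  calc genMut r k A
      = A + Matrix.replicateCol Unit (uVec r k A) * Matrix.replicateRow Unit (A k)
        + Matrix.replicateCol Unit (fun i => A i k) * Matrix.replicateRow Unit (wVec r k A) := by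
        ext i j
        simp only [genMut, Matrix.of_apply, Matrix.add_apply, Matrix.mul_apply,
          Matrix.replicateCol_apply, Matrix.replicateRow_apply, Finset.univ_unique, Finset.sum_singleton]
        by_cases hi : i = k <;> by_cases hj : j = k <;>
          simp [hi, hj, uVec, wVec, hA] <;> ring
    _ = Emat r k A * A * Fmat r k A := by
        rw [hE, Fmat, mul_add, mul_one, add_mul, h2, h3, add_zero]

/-- Skew-symmetrizability is preserved by a generalized mutation. -/
theorem skew_step (r : Fin n → ℤ) (t : Fin n → ℤ) (ht : ∀ i, 0 < t i)
    (k : Fin n) (A : Matrix (Fin n) (Fin n) ℤ)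
    (hskew : ((Matrix.diagonal t) * A)ᵀ = -((Matrix.diagonal t) * A)) :
    ((Matrix.diagonal t) * genMut r k A)ᵀ = -((Matrix.diagonal t) * genMut r k A) := by
  have h : ∀ i j, t j * A j i = -(t i * A i j) := by
    intro i j
    have := congrFun (congrFun hskew i) j
    simpa [Matrix.diagonal_mul] using this
  ext i j
  simp only [Matrix.transpose_apply, Matrix.neg_apply, Matrix.diagonal_mul, genMut,
    Matrix.of_apply]
  by_cases hi : i = k <;> by_cases hj : j = k
  · simp only [hi, hj, or_self, if_true]
    linarith [h k k]
  · simp only [hi, hj, true_or, if_true, or_true]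
    linarith [h k j]
  · simp only [hi, hj, or_true, if_true, true_or]
    linarith [h i k]
  · simp only [hi, hj, or_self, if_false]
    have e1 : t j * A j k = -(t k * A k j) := by linarith [h j k]
    have e4 : t i * A i k = -(t k * A k i) := by linarith [h i k]
    have e2 : t i * max (A i k) 0 = t k * max (-A k i) 0 := by
      rw [mul_max_of_nonneg _ _ (ht i).le, mul_max_of_nonneg _ _ (ht k).le,
        mul_zero, mul_zero, e4, mul_neg]
    have e3 : t j * max (A j k) 0 = t k * max (-A k j) 0 := by
      rw [mul_max_of_nonneg _ _ (ht j).le, mul_max_of_nonneg _ _ (ht k).le,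
        mul_zero, mul_zero, e1, mul_neg]
    linear_combination (h i j) + r k * max (-A k i) 0 * e1 + r k * A k i * e3
      + r k * max (-A k j) 0 * e4 + r k * A k j * e2

theorem diag_zero (t : Fin n → ℤ) (ht : ∀ i, 0 < t i) (k : Fin n)
    (A : Matrix (Fin n) (Fin n) ℤ)
    (hskew : ((Matrix.diagonal t) * A)ᵀ = -((Matrix.diagonal t) * A)) :
    A k k = 0 := by
  have h := congrFun (congrFun hskew k) k
  simp only [Matrix.transpose_apply, Matrix.neg_apply, Matrix.diagonal_mul] at h
  have h1 : t k * A k k = 0 := by linarith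
  rcases mul_eq_zero.mp h1 with h' | h'
  · exact absurd h' (ht k).ne'
  · exact h'

end GenMutAux

/-- in an `(R,Z)`-cluster pattern, the exchange matrices at any two
vertices of the `n`-regular tree — i.e. any two skew-symmetrizable matrices related
by a finite sequence of generalized matrix mutations — have equal rank and equal
determinant. -/
theorem exchange_matrices_rank_det (n : ℕ) (r : Fin n → ℤ) (hr : ∀ i, 0 < r i)
    (t : Fin n → ℤ) (ht : ∀ i, 0 < t i)
    (B₀ B : Matrix (Fin n) (Fin n) ℤ)
    (hskew : ((Matrix.diagonal t) * B₀)ᵀ = -((Matrix.diagonal t) * B₀))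
    (hwalk : Relation.ReflTransGen
      (fun A A' : Matrix (Fin n) (Fin n) ℤ => ∃ k : Fin n, A' = genMut r k A) B₀ B) :
    B.rank = B₀.rank ∧ B.det = B₀.det := by
  suffices H : ((Matrix.diagonal t) * B)ᵀ = -((Matrix.diagonal t) * B) ∧
      B.rank = B₀.rank ∧ B.det = B₀.det from H.2
  induction hwalk with
  | refl => exact ⟨hskew, rfl, rfl⟩
  | tail hab hbc ih =>
    obtain ⟨hskewA, hrankA, hdetA⟩ := ih
    obtain ⟨k, rfl⟩ := hbc
    refine ⟨GenMutAux.skew_step r t ht k _ hskewA, ?_, ?_⟩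
    · rw [GenMutAux.factor r k _ (GenMutAux.diag_zero t ht k _ hskewA)]
      rw [Matrix.rank_mul_eq_left_of_isUnit_det _ _
          (by rw [GenMutAux.det_Fmat]; exact isUnit_one.neg),
        Matrix.rank_mul_eq_right_of_isUnit_det _ _
          (by rw [GenMutAux.det_Emat]; exact isUnit_one.neg)]
      exact hrankA
    · rw [GenMutAux.factor r k _ (GenMutAux.diag_zero t ht k _ hskewA)]
      rw [Matrix.det_mul, Matrix.det_mul, GenMutAux.det_Emat, GenMutAux.det_Fmat]
      simpa using hdetA
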